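/- Let P and Q be orthogonal projection matrices in M_N(ℂ) with rank(P) = p and rank(Q) = q, where p ≤ q and p + q ≤ N. Let θ > 0 be real. Assume the characteristic polynomial of PQP equals X^{N−p}·∏_{i=1}^{p}(X − tᵢ), where t₁, …, t_p are distinct numbers in the open interval (0,1). Then the characteristic polynomial of P + θQ equals X^{N−p−q}·(X − θ)^{q−p}·∏_{i=1}^{p}(X − λᵢ⁺)(X − λᵢ⁻), where λᵢ^± = (1 + θ ± √((1−θ)² + 4θtᵢ))/2. In particular, P + θQ has 2p distinct eigenvalues different from 0 and θ, the eigenvalue θ with multiplicity q − p, and the eigenvalue 0 with multiplicity N − p − q. -/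

import Mathlib

open Matrix Polynomial


lemma aux_eval_charpoly {n : ℕ} (M : Matrix (Fin n) (Fin n) ℂ) (x : ℂ) :
    M.charpoly.eval x = (x • (1 : Matrix (Fin n) (Fin n) ℂ) - M).det := by
  rw [Matrix.charpoly, ← Polynomial.coe_evalRingHom, RingHom.map_det]
  congr 1
  ext i j
  by_cases h : i = j
  · subst h; simp [Matrix.charmatrix_apply_eq, Matrix.one_apply_eq]
  · simp [Matrix.charmatrix_apply_ne _ _ _ h, Matrix.one_apply_ne h]

lemma aux_det_conj {n : ℕ} (U A V : Matrix (Fin n) (Fin n) ℂ) (hUV : U * V = 1) :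
    (U * A * V).det = A.det := by
  rw [det_mul, det_mul, mul_right_comm, ← det_mul, hUV, det_one, one_mul]

lemma aux_charpoly_conj {n : ℕ} (U A V : Matrix (Fin n) (Fin n) ℂ) (hUV : U * V = 1)
    (hVU : V * U = 1) : (U * A * V).charpoly = A.charpoly := by
  unfold Matrix.charpoly
  have h : charmatrix (U * A * V) =
      (U.map C) * charmatrix A * (V.map C) := by
    simp only [charmatrix, RingHom.mapMatrix_apply, Matrix.mul_sub, Matrix.sub_mul]
    congr 1
    · have h1 : (Matrix.scalar (Fin n) (X : ℂ[X])) = (X : ℂ[X]) • (1 : Matrix (Fin n) (Fin n) ℂ[X]) := by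
        rw [Matrix.scalar_apply, smul_eq_diagonal_mul, Matrix.mul_one]
      rw [h1, mul_smul_comm, smul_mul_assoc, Matrix.mul_one, ← Matrix.map_mul, hUV,
        Matrix.map_one C (map_zero C) (map_one C)]
    · rw [← Matrix.map_mul, ← Matrix.map_mul]
  rw [h, det_mul, det_mul, mul_comm ((U.map C).det * (charmatrix A).det) ((V.map C).det),
    ← mul_assoc, ← det_mul, ← Matrix.map_mul, hVU, Matrix.map_one C (map_zero C) (map_one C),
    det_one, one_mul]

lemma aux_charpoly_diagonal {n : ℕ} (v : Fin n → ℂ) :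
    (diagonal v).charpoly = ∏ i, (X - C (v i)) := by
  unfold Matrix.charpoly
  have : charmatrix (diagonal v) = diagonal (fun i => X - C (v i)) := by
    ext i j
    by_cases h : i = j
    · subst h; simp [charmatrix_apply_eq]
    · simp [charmatrix_apply_ne _ _ _ h, diagonal_apply_ne _ h]
  rw [this, det_diagonal]

lemma aux_trace_zero {n : ℕ} (K : Matrix (Fin n) (Fin n) ℂ) (hH : Kᴴ = K)
    (hI : K * K = K) (ht : K.trace = 0) : K = 0 := by
  have h1 : (Kᴴ * K).trace = 0 := by rw [hH, hI, ht]
  have h2 : (Kᴴ * K).trace = ((∑ j, ∑ i, Complex.normSq (K i j) : ℝ) : ℂ) := by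
    simp only [Matrix.trace, Matrix.diag, Matrix.mul_apply, Matrix.conjTranspose_apply]
    push_cast
    congr 1; ext j; congr 1; ext i
    rw [Complex.star_def, ← Complex.normSq_eq_conj_mul_self]
  rw [h2] at h1
  have h3 : (∑ j, ∑ i, Complex.normSq (K i j) : ℝ) = 0 := by exact_mod_cast h1
  have h4 : ∀ j ∈ Finset.univ, ∀ i ∈ Finset.univ, Complex.normSq (K i j) = 0 := by
    have hnonneg : ∀ j ∈ (Finset.univ : Finset (Fin n)),
        0 ≤ ∑ i, Complex.normSq (K i j) :=
      fun j _ => Finset.sum_nonneg fun i _ => Complex.normSq_nonneg _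
    intro j hj i hi
    have := (Finset.sum_eq_zero_iff_of_nonneg hnonneg).1 h3 j hj
    exact (Finset.sum_eq_zero_iff_of_nonneg
      (fun i _ => Complex.normSq_nonneg _)).1 this i hi
  ext i j
  simpa using Complex.normSq_eq_zero.1 (h4 j (Finset.mem_univ j) i (Finset.mem_univ i))

/-- Eigenvalues of a Hermitian idempotent are 0 or 1, and exactly `rank` of them are nonzero. -/
lemma aux_proj_eigs {n r : ℕ} (A : Matrix (Fin n) (Fin n) ℂ) (hA : A.IsHermitian)
    (hA2 : A * A = A) (hr : A.rank = r) :
    (∀ i, (hA.eigenvalues i : ℂ) = 0 ∨ (hA.eigenvalues i : ℂ) = 1) ∧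
      (Finset.univ.filter fun i => ¬ ((hA.eigenvalues i : ℂ) = 0)).card = r := by
  classical
  set U : Matrix (Fin n) (Fin n) ℂ := (hA.eigenvectorUnitary : Matrix (Fin n) (Fin n) ℂ)
  have hU1 : U * star U = 1 := (Matrix.mem_unitaryGroup_iff).mp hA.eigenvectorUnitary.2
  have hdiag : (star U) * A * U = diagonal (RCLike.ofReal ∘ hA.eigenvalues) :=
    by
      have hU2 : star U * U = 1 := (Matrix.mem_unitaryGroup_iff').mp hA.eigenvectorUnitary.2
      have := hA.spectral_theorem
      rw [Unitary.conjStarAlgAut_apply] at this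
      conv_lhs => rw [this]
      change star U * (U * _ * star U) * U = _
      rw [← Matrix.mul_assoc, ← Matrix.mul_assoc, hU2, Matrix.one_mul, Matrix.mul_assoc, hU2,
        Matrix.mul_one]
  have hDD : (diagonal (RCLike.ofReal ∘ hA.eigenvalues) : Matrix (Fin n) (Fin n) ℂ) *
        diagonal (RCLike.ofReal ∘ hA.eigenvalues)
      = (diagonal (RCLike.ofReal ∘ hA.eigenvalues) : Matrix (Fin n) (Fin n) ℂ) := by
    rw [← hdiag]
    calc (star U * A * U) * (star U * A * U) = star U * (A * (U * star U) * A) * U := by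
          simp only [Matrix.mul_assoc]
      _ = star U * A * U := by rw [hU1, Matrix.mul_one, hA2]
  have hDD2 : ∀ i, (hA.eigenvalues i : ℂ) * (hA.eigenvalues i : ℂ) = (hA.eigenvalues i : ℂ) := by
    intro i
    have h : (diagonal (fun j => ((hA.eigenvalues j : ℂ)) * ((hA.eigenvalues j : ℂ))) :
          Matrix (Fin n) (Fin n) ℂ)
        = diagonal ((RCLike.ofReal ∘ hA.eigenvalues) : Fin n → ℂ) := by
      rw [← diagonal_mul_diagonal]
      exact hDD
    have h2 := congrFun (congrFun h i) i
    simpa [Matrix.diagonal_apply_eq] using h2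
  have h01 : ∀ i, (hA.eigenvalues i : ℂ) = 0 ∨ (hA.eigenvalues i : ℂ) = 1 := by
    intro i
    have h := hDD2 i
    have h2 : (hA.eigenvalues i : ℂ) * ((hA.eigenvalues i : ℂ) - 1) = 0 := by ring_nf; linear_combination h
    rcases mul_eq_zero.1 h2 with h3 | h3
    · exact Or.inl h3
    · exact Or.inr (by linear_combination h3)
  refine ⟨h01, ?_⟩
  have hcard := hA.rank_eq_card_non_zero_eigs
  rw [hr] at hcard
  rw [show (Finset.univ.filter fun i => ¬ ((hA.eigenvalues i : ℂ) = 0))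
      = (Finset.univ.filter fun i => hA.eigenvalues i ≠ 0) from
    Finset.filter_congr (fun i _ => by simp [Complex.ofReal_eq_zero]), ← Fintype.card_subtype]
  exact hcard.symm

lemma aux_proj_det_smul {n r : ℕ} (A : Matrix (Fin n) (Fin n) ℂ) (hA : A.IsHermitian)
    (hA2 : A * A = A) (hr : A.rank = r) (x c : ℂ) :
    (x • (1 : Matrix (Fin n) (Fin n) ℂ) - c • A).det = x ^ (n - r) * (x - c) ^ r := by
  classical
  obtain ⟨h01, hcard⟩ := aux_proj_eigs A hA hA2 hr
  set U : Matrix (Fin n) (Fin n) ℂ := (hA.eigenvectorUnitary : Matrix (Fin n) (Fin n) ℂ)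
  have hU1 : U * star U = 1 := (Matrix.mem_unitaryGroup_iff).mp hA.eigenvectorUnitary.2
  have hdiag : A = U * diagonal (fun i => (hA.eigenvalues i : ℂ)) * star U := by
    have := hA.spectral_theorem
    rw [Unitary.conjStarAlgAut_apply] at this
    exact this
  set d : Fin n → ℂ := fun i => (hA.eigenvalues i : ℂ) with hd
  have hsplit : x • (1 : Matrix (Fin n) (Fin n) ℂ) - c • A
      = U * (x • (1 : Matrix (Fin n) (Fin n) ℂ) - c • diagonal d) * star U := by
    rw [Matrix.mul_sub, Matrix.sub_mul, mul_smul_comm, smul_mul_assoc, Matrix.mul_one, hU1,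
      mul_smul_comm, smul_mul_assoc, ← hdiag]
  rw [hsplit, aux_det_conj _ _ _ hU1]
  have hdd : x • (1 : Matrix (Fin n) (Fin n) ℂ) - c • diagonal d
      = diagonal (fun i => x - c * d i) := by
    ext i j
    by_cases h : i = j
    · subst h; simp
    · simp [Matrix.one_apply_ne h, Matrix.diagonal_apply_ne _ h]
  rw [hdd, det_diagonal]
  rw [← Finset.prod_filter_mul_prod_filter_not Finset.univ (fun i => ¬ (d i = 0))]
  have h1 : ∀ i ∈ Finset.univ.filter (fun i => ¬ (d i = 0)), x - c * d i = x - c := by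
    intro i hi
    rcases h01 i with h | h
    · exact absurd h (Finset.mem_filter.1 hi).2
    · show x - c * ((hA.eigenvalues i : ℝ) : ℂ) = x - c
      rw [h, mul_one]
  have h2 : ∀ i ∈ Finset.univ.filter (fun i => ¬ ¬ (d i = 0)), x - c * d i = x := by
    intro i hi
    have := (Finset.mem_filter.1 hi).2
    rw [not_not.1 this, mul_zero, sub_zero]
  rw [Finset.prod_congr rfl h1, Finset.prod_congr rfl h2, Finset.prod_const, Finset.prod_const,
    hcard]
  have hcard2 : (Finset.univ.filter fun i => ¬ ¬ (d i = 0)).card = n - r := by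
    have := Finset.card_filter_add_card_filter_not
      (s := (Finset.univ : Finset (Fin n))) (p := fun i => ¬ (d i = 0))
    simp only [Finset.card_univ, Fintype.card_fin] at this
    have h3 : (Finset.univ.filter (fun i => ¬ (d i = 0))).card = r := hcard
    omega
  rw [hcard2]; ring

lemma aux_proj_trace {n r : ℕ} (A : Matrix (Fin n) (Fin n) ℂ) (hA : A.IsHermitian)
    (hA2 : A * A = A) (hr : A.rank = r) : A.trace = (r : ℂ) := by
  classical
  obtain ⟨h01, hcard⟩ := aux_proj_eigs A hA hA2 hr
  set U : Matrix (Fin n) (Fin n) ℂ := (hA.eigenvectorUnitary : Matrix (Fin n) (Fin n) ℂ)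
  have hU2 : star U * U = 1 := (Matrix.mem_unitaryGroup_iff').mp hA.eigenvectorUnitary.2
  have hdiag : A = U * diagonal (fun i => (hA.eigenvalues i : ℂ)) * star U := by
    have := hA.spectral_theorem
    rw [Unitary.conjStarAlgAut_apply] at this
    exact this
  set d : Fin n → ℂ := fun i => (hA.eigenvalues i : ℂ) with hd
  rw [hdiag, Matrix.trace_mul_cycle, hU2, Matrix.one_mul, Matrix.trace_diagonal]
  rw [← Finset.sum_filter_add_sum_filter_not Finset.univ (fun i => ¬ (d i = 0))]
  have h1 : ∀ i ∈ Finset.univ.filter (fun i => ¬ (d i = 0)), d i = 1 := by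
    intro i hi
    rcases h01 i with h | h
    · exact absurd h (Finset.mem_filter.1 hi).2
    · exact h
  have h2 : ∀ i ∈ Finset.univ.filter (fun i => ¬ ¬ (d i = 0)), d i = 0 := by
    intro i hi
    exact not_not.1 (Finset.mem_filter.1 hi).2
  rw [Finset.sum_congr rfl h1, Finset.sum_congr rfl h2, Finset.sum_const, Finset.sum_const,
    hcard]
  simp


/-- Let `P, Q` be orthogonal projection matrices in `M_N(ℂ)` with
`rank P = p`, `rank Q = q`, `p ≤ q`, `p + q ≤ N`, and let `θ > 0`.  If the characteristic
polynomial of `PQP` is `X^(N-p) ∏ᵢ (X - tᵢ)` with `t₁, …, t_p` distinct in `(0,1)`, then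
the characteristic polynomial of `P + θQ` is
`X^(N-p-q) (X - θ)^(q-p) ∏ᵢ (X - λᵢ⁺)(X - λᵢ⁻)` where
`λᵢ^± = (1 + θ ± √((1-θ)² + 4θtᵢ))/2`; the `2p` numbers `λᵢ^±` are distinct and
different from `0` and `θ`. -/
theorem charpoly_P_add_theta_Q
    (N p q : ℕ) (hpq : p ≤ q) (hpqN : p + q ≤ N)
    (P Q : Matrix (Fin N) (Fin N) ℂ)
    (hP : P.IsHermitian) (hP2 : P * P = P) (hrankP : P.rank = p)
    (hQ : Q.IsHermitian) (hQ2 : Q * Q = Q) (hrankQ : Q.rank = q)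
    (θ : ℝ) (hθ : 0 < θ)
    (t : Fin p → ℝ) (ht : ∀ i, t i ∈ Set.Ioo (0 : ℝ) 1) (htinj : Function.Injective t)
    (hchar : (P * Q * P).charpoly =
      X ^ (N - p) * ∏ i : Fin p, (X - C ((t i : ℂ))))
    (lam : Fin p → Bool → ℝ)
    (hlam : ∀ i s, lam i s =
      (1 + θ + (if s then 1 else -1) * Real.sqrt ((1 - θ) ^ 2 + 4 * θ * t i)) / 2) :
    (P + (θ : ℂ) • Q).charpoly =
        X ^ (N - p - q) * (X - C ((θ : ℝ) : ℂ)) ^ (q - p) *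
          ∏ i : Fin p, ((X - C ((lam i true : ℝ) : ℂ)) * (X - C ((lam i false : ℝ) : ℂ))) ∧
    Function.Injective (fun z : Fin p × Bool => lam z.1 z.2) ∧
    (∀ i s, lam i s ≠ 0 ∧ lam i s ≠ θ) := by
  classical
  -- ## Real arithmetic about the λ's
  have hDnn : ∀ i, 0 ≤ (1 - θ) ^ 2 + 4 * θ * t i := by
    intro i; nlinarith [(ht i).1, sq_nonneg (1 - θ)]
  have hsl : ∀ i, |1 - θ| < Real.sqrt ((1 - θ) ^ 2 + 4 * θ * t i) := by
    intro i
    rw [← Real.sqrt_sq_eq_abs]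
    exact Real.sqrt_lt_sqrt (sq_nonneg _) (by nlinarith [(ht i).1])
  have hsu : ∀ i, Real.sqrt ((1 - θ) ^ 2 + 4 * θ * t i) < 1 + θ := by
    intro i
    have h1 : Real.sqrt ((1 - θ) ^ 2 + 4 * θ * t i) < Real.sqrt ((1 + θ) ^ 2) :=
      Real.sqrt_lt_sqrt (hDnn i) (by nlinarith [(ht i).2])
    rwa [Real.sqrt_sq_eq_abs, abs_of_pos (by linarith)] at h1
  have hgt1 : ∀ i, 1 < lam i true := by
    intro i
    rw [hlam i true]
    have h1 := hsl i
    have h2 : 1 - θ ≤ |1 - θ| := le_abs_self _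
    simp only [if_pos]
    linarith
  have hgtθ : ∀ i, θ < lam i true := by
    intro i
    rw [hlam i true]
    have h1 := hsl i
    have h2 : -(1 - θ) ≤ |1 - θ| := neg_le_abs _
    simp only [if_pos]
    linarith
  have hfpos : ∀ i, 0 < lam i false := by
    intro i
    rw [hlam i false]
    have h1 := hsu i
    simp only [if_neg Bool.false_ne_true]
    linarith
  have hlt1 : ∀ i, lam i false < 1 := by
    intro i
    rw [hlam i false]
    have h1 := hsl i
    have h2 : -(1 - θ) ≤ |1 - θ| := neg_le_abs _
    simp only [if_neg Bool.false_ne_true]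
    linarith
  have hltθ : ∀ i, lam i false < θ := by
    intro i
    rw [hlam i false]
    have h1 := hsl i
    have h2 : 1 - θ ≤ |1 - θ| := le_abs_self _
    simp only [if_neg Bool.false_ne_true]
    linarith
  have hsqrt_inj : ∀ i j : Fin p,
      Real.sqrt ((1 - θ) ^ 2 + 4 * θ * t i) = Real.sqrt ((1 - θ) ^ 2 + 4 * θ * t j) → i = j := by
    intro i j hsq
    have h1 : (1 - θ) ^ 2 + 4 * θ * t i = (1 - θ) ^ 2 + 4 * θ * t j := by
      have := congrArg (fun y => y ^ 2) hsq
      simpa [Real.sq_sqrt (hDnn i), Real.sq_sqrt (hDnn j)] using this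
    have h4 : (4 : ℝ) * θ ≠ 0 := by positivity
    exact htinj (mul_left_cancel₀ h4 (by linarith))
  have hinj : Function.Injective (fun z : Fin p × Bool => lam z.1 z.2) := by
    rintro ⟨i, si⟩ ⟨j, sj⟩ h
    simp only at h
    match si, sj with
    | true, true =>
        rw [hlam i true, hlam j true] at h
        simp only [if_pos] at h
        exact Prod.ext (hsqrt_inj i j (by linarith)) rfl
    | false, false =>
        rw [hlam i false, hlam j false] at h
        simp only [if_neg Bool.false_ne_true] at h
        exact Prod.ext (hsqrt_inj i j (by linarith)) rfl
    | true, false => exact absurd h (by have := hgt1 i; have := hlt1 j; intro hc; linarith)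
    | false, true => exact absurd h (by have := hgt1 j; have := hlt1 i; intro hc; linarith)
  have hne : ∀ i s, lam i s ≠ 0 ∧ lam i s ≠ θ := by
    intro i s
    match s with
    | true => exact ⟨((hθ.trans (hgtθ i)).ne'), (hgtθ i).ne'⟩
    | false => exact ⟨(hfpos i).ne', (hltθ i).ne⟩
  refine ⟨?_, hinj, hne⟩

  -- ## Part 1 : the characteristic polynomial
  have hθ0 : θ ≠ 0 := hθ.ne'
  have hθC : ((θ : ℝ) : ℂ) ≠ 0 := by exact_mod_cast hθ0
  have hsumR : ∀ i, lam i true + lam i false = 1 + θ := by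
    intro i; rw [hlam i true, hlam i false]; simp; ring
  have hs2 : ∀ i, Real.sqrt ((1 - θ) ^ 2 + 4 * θ * t i) * Real.sqrt ((1 - θ) ^ 2 + 4 * θ * t i)
      = (1 - θ) ^ 2 + 4 * θ * t i := fun i => Real.mul_self_sqrt (hDnn i)
  have hprodR : ∀ i, lam i true * lam i false = θ - θ * t i := by
    intro i; rw [hlam i true, hlam i false]; simp only [if_true, Bool.false_eq_true, if_false]
    linear_combination (-(1:ℝ)/4) * hs2 i
  have hS : (P * Q * P).IsHermitian := by
    show (P * Q * P)ᴴ = P * Q * P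
    rw [Matrix.conjTranspose_mul, Matrix.conjTranspose_mul, hP.eq, hQ.eq, Matrix.mul_assoc]
  set U : Matrix (Fin N) (Fin N) ℂ := (hS.eigenvectorUnitary : Matrix (Fin N) (Fin N) ℂ) with hUdef
  have hU1 : U * star U = 1 := (Matrix.mem_unitaryGroup_iff).mp hS.eigenvectorUnitary.2
  have hU2 : star U * U = 1 := (Matrix.mem_unitaryGroup_iff').mp hS.eigenvectorUnitary.2
  have hcan1 : ∀ A : Matrix (Fin N) (Fin N) ℂ, U * (star U * A) = A := fun A => by
    rw [← Matrix.mul_assoc, hU1, Matrix.one_mul]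
  have hcan2 : ∀ A : Matrix (Fin N) (Fin N) ℂ, star U * (U * A) = A := fun A => by
    rw [← Matrix.mul_assoc, hU2, Matrix.one_mul]
  have hcanP : ∀ A : Matrix (Fin N) (Fin N) ℂ, P * (P * A) = P * A := fun A => by
    rw [← Matrix.mul_assoc, hP2]
  have hSdecomp : P * Q * P = U * diagonal (fun i => (hS.eigenvalues i : ℂ)) * star U := by
    have := hS.spectral_theorem; rw [Unitary.conjStarAlgAut_apply] at this; exact this
  set dC : Fin N → ℂ := fun i => (hS.eigenvalues i : ℂ) with hdC
  have hchard : (∏ i, (X - C (dC i))) = X ^ (N - p) * ∏ i : Fin p, (X - C ((t i : ℂ))) := by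
    rw [← aux_charpoly_diagonal, ← aux_charpoly_conj U (diagonal dC) (star U) hU1 hU2,
      ← hSdecomp, hchar]
  have hm : (Finset.univ.val.map dC)
      = (N - p) • ({0} : Multiset ℂ) + Finset.univ.val.map (fun i : Fin p => ((t i : ℂ))) := by
    have hL : (∏ i, (X - C (dC i))).roots = Finset.univ.val.map dC := by
      rw [Finset.prod_eq_multiset_prod,
        show Multiset.map (fun i => X - C (dC i)) Finset.univ.val
          = ((Finset.univ.val.map dC).map (fun a => X - C a)) from by simp only [Multiset.map_map]; rfl,
        Polynomial.roots_multiset_prod_X_sub_C]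
    have hprodne : (∏ i : Fin p, (X - C ((t i : ℂ)))) ≠ 0 :=
      (Polynomial.monic_prod_of_monic _ _ fun i _ => Polynomial.monic_X_sub_C _).ne_zero
    have hR : (X ^ (N - p) * ∏ i : Fin p, (X - C ((t i : ℂ)))).roots
        = (N - p) • ({0} : Multiset ℂ)
          + Finset.univ.val.map (fun i : Fin p => ((t i : ℂ))) := by
      rw [Polynomial.roots_mul (mul_ne_zero (pow_ne_zero _ Polynomial.X_ne_zero) hprodne),
        Polynomial.roots_pow, Polynomial.roots_X,
        Finset.prod_eq_multiset_prod,
        show Multiset.map (fun i : Fin p => X - C ((t i : ℂ))) Finset.univ.val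
          = ((Finset.univ.val.map (fun i : Fin p => ((t i : ℂ)))).map (fun a => X - C a))
          from by simp only [Multiset.map_map]; rfl,
        Polynomial.roots_multiset_prod_X_sub_C]
    rw [← hL, hchard, hR]
  have key_prod : ∀ f : ℂ → ℂ, f 0 = 1 → ∏ i, f (dC i) = ∏ i : Fin p, f ((t i : ℂ)) := by
    intro f hf
    rw [Finset.prod_eq_multiset_prod,
      show Multiset.map (fun i => f (dC i)) Finset.univ.val = ((Finset.univ.val.map dC).map f)
        from by simp only [Multiset.map_map]; rfl,
      hm, Multiset.map_add, Multiset.prod_add, Multiset.nsmul_singleton, Multiset.map_replicate,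
      hf, Multiset.prod_replicate, one_pow, one_mul, Multiset.map_map,
      ← Finset.prod_eq_multiset_prod]
    simp [Function.comp]
  have key_sum : ∀ f : ℂ → ℂ, f 0 = 0 → ∑ i, f (dC i) = ∑ i : Fin p, f ((t i : ℂ)) := by
    intro f hf
    rw [Finset.sum_eq_multiset_sum,
      show Multiset.map (fun i => f (dC i)) Finset.univ.val = ((Finset.univ.val.map dC).map f)
        from by simp only [Multiset.map_map]; rfl,
      hm, Multiset.map_add, Multiset.sum_add, Multiset.nsmul_singleton, Multiset.map_replicate,
      hf, Multiset.sum_replicate, smul_zero, zero_add, Multiset.map_map,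
      ← Finset.sum_eq_multiset_sum]
    simp [Function.comp]
  set eF : ℂ → ℂ := fun z => if z = 0 then 0 else 1 with heF
  have htC0 : ∀ i : Fin p, ((t i : ℂ)) ≠ 0 := fun i => by
    exact_mod_cast (ht i).1.ne'
  have htraceP : P.trace = (p : ℂ) := aux_proj_trace P hP hP2 hrankP
  set P' : Matrix (Fin N) (Fin N) ℂ := star U * P * U with hP'def
  have hP'H : P'ᴴ = P' := by
    rw [hP'def]
    simp [Matrix.conjTranspose_mul, Matrix.star_eq_conjTranspose,
      Matrix.conjTranspose_conjTranspose, hP.eq, Matrix.mul_assoc]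
  have hP'2 : P' * P' = P' := by
    rw [hP'def]; simp only [Matrix.mul_assoc, hcan1, hcan2, hcanP, hU1, hU2,
      Matrix.mul_one, Matrix.one_mul]
  have hSdiag : star U * (P * Q * P) * U = diagonal dC := by
    rw [hSdecomp]
    simp only [Matrix.mul_assoc, hcan1, hcan2, hU1, hU2, Matrix.mul_one, Matrix.one_mul]
  have hP'D : P' * diagonal dC = diagonal dC := by
    rw [← hSdiag, hP'def]
    simp only [Matrix.mul_assoc, hcan1, hcan2, hcanP, hU1, hU2, Matrix.mul_one, Matrix.one_mul]
  have hDP' : diagonal dC * P' = diagonal dC := by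
    rw [← hSdiag, hP'def]
    simp only [Matrix.mul_assoc, hcan1, hcan2, hU1, hU2, Matrix.mul_one, Matrix.one_mul]
    rw [show P * (Q * (P * (P * U))) = P * (Q * (P * U)) from by
      rw [← Matrix.mul_assoc P P U, hP2]]
  have hrowP' : ∀ i j, dC i ≠ 0 → P' i j = if i = j then 1 else 0 := by
    intro i j hdi
    have h := congrFun (congrFun hDP' i) j
    rw [Matrix.diagonal_mul] at h
    by_cases hij : i = j
    · subst hij
      rw [Matrix.diagonal_apply_eq] at h
      rw [if_pos rfl]
      exact mul_left_cancel₀ hdi (h.trans (mul_one _).symm)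
    · rw [Matrix.diagonal_apply_ne _ hij] at h
      rw [if_neg hij]
      rcases mul_eq_zero.1 h with h' | h'
      · exact absurd h' hdi
      · exact h'
  have hcolP' : ∀ i j, dC j ≠ 0 → P' i j = if i = j then 1 else 0 := by
    intro i j hdj
    have h := congrFun (congrFun hP'D i) j
    rw [Matrix.mul_diagonal] at h
    by_cases hij : i = j
    · subst hij
      rw [Matrix.diagonal_apply_eq] at h
      rw [if_pos rfl]
      exact mul_right_cancel₀ hdj (h.trans (one_mul _).symm)
    · rw [Matrix.diagonal_apply_ne _ hij] at h
      rw [if_neg hij]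
      rcases mul_eq_zero.1 h with h' | h'
      · exact h'
      · exact absurd h' hdj
  set E : Matrix (Fin N) (Fin N) ℂ := diagonal (fun i => eF (dC i)) with hEdef
  have hEP' : E * P' = E := by
    ext i j
    rw [hEdef, Matrix.diagonal_mul]
    by_cases hdi : dC i = 0
    · simp [eF, hdi, Matrix.diagonal_apply]
    · rw [hrowP' i j hdi]
      by_cases hij : i = j
      · subst hij; simp [eF, hdi]
      · simp [hij, Matrix.diagonal_apply_ne _ hij]
  have hP'E : P' * E = E := by
    ext i j
    rw [hEdef, Matrix.mul_diagonal]
    by_cases hdj : dC j = 0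
    · by_cases hij : i = j
      · subst hij; simp [eF, hdj]
      · simp [eF, hdj, Matrix.diagonal_apply_ne _ hij]
    · rw [hcolP' i j hdj]
      by_cases hij : i = j
      · subst hij; simp [eF, hdj]
      · simp [hij, Matrix.diagonal_apply_ne _ hij]
  have hEstar : ∀ i, star (eF (dC i)) = eF (dC i) := fun i => by
    by_cases h : dC i = 0 <;> simp [eF, h]
  have hEH : Eᴴ = E := by
    rw [hEdef, Matrix.diagonal_conjTranspose]
    exact congrArg Matrix.diagonal (funext fun i => hEstar i)
  have hE2 : E * E = E := by
    rw [hEdef, diagonal_mul_diagonal]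
    exact congrArg Matrix.diagonal (funext fun i => by by_cases h : dC i = 0 <;> simp [eF, h])
  have htraceE : E.trace = (p : ℂ) := by
    rw [hEdef, Matrix.trace_diagonal]
    rw [key_sum eF (by simp [eF])]
    rw [Finset.sum_congr rfl (fun i _ => by simp [eF, htC0 i] : ∀ i ∈ Finset.univ,
      eF ((t i : ℂ)) = 1)]
    simp
  have htraceP' : P'.trace = (p : ℂ) := by
    rw [hP'def, Matrix.trace_mul_cycle, hU1, Matrix.one_mul, htraceP]
  have hKzero : P' - E = 0 := by
    apply aux_trace_zero
    · rw [Matrix.conjTranspose_sub, hP'H, hEH]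
    · rw [Matrix.sub_mul, Matrix.mul_sub, Matrix.mul_sub, hP'2, hP'E, hEP', hE2]
      abel
    · rw [Matrix.trace_sub, htraceP', htraceE, sub_self]
  have hP'eqE : P' = E := sub_eq_zero.mp hKzero
  have hPdecomp : P = U * E * star U := by
    rw [← hP'eqE, hP'def]
    simp only [Matrix.mul_assoc, hcan1, hcan2, hU1, hU2, Matrix.mul_one, Matrix.one_mul]
  have main_eval : ∀ x : ℂ, x ≠ 0 → x ≠ ((θ : ℝ) : ℂ) →
      (x • (1 : Matrix (Fin N) (Fin N) ℂ) - (P + (θ : ℂ) • Q)).det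
        = x ^ (N - p - q) * (x - ((θ : ℝ) : ℂ)) ^ (q - p) *
          ∏ i : Fin p, ((x - ((lam i true : ℝ) : ℂ)) * (x - ((lam i false : ℝ) : ℂ))) := by
    intro x hx hxθ'
    have hxθ : x - ((θ : ℝ) : ℂ) ≠ 0 := sub_ne_zero.mpr hxθ'
    set R : Matrix (Fin N) (Fin N) ℂ := x⁻¹ • (1 - Q) + (x - ((θ : ℝ) : ℂ))⁻¹ • Q with hRdef
    have hQ1Q : Q * ((1 : Matrix (Fin N) (Fin N) ℂ) - Q) = 0 := by
      rw [Matrix.mul_sub, Matrix.mul_one, hQ2, sub_self]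
    have h1 : (x • (1 : Matrix (Fin N) (Fin N) ℂ) - ((θ : ℝ) : ℂ) • Q) * R = 1 := by
      rw [hRdef]
      simp only [Matrix.mul_add, Matrix.sub_mul, smul_mul_assoc, mul_smul_comm,
        Matrix.one_mul, hQ1Q, hQ2, smul_zero, smul_smul]
      match_scalars <;> field_simp <;> ring
    have h2 : x • (1 : Matrix (Fin N) (Fin N) ℂ) - (P + (θ : ℂ) • Q)
        = (x • 1 - ((θ : ℝ) : ℂ) • Q) * (1 - R * P) := by
      rw [Matrix.mul_sub, Matrix.mul_one, ← Matrix.mul_assoc, h1, Matrix.one_mul]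
      abel
    rw [h2, det_mul]
    have hdetQ : (x • (1 : Matrix (Fin N) (Fin N) ℂ) - ((θ : ℝ) : ℂ) • Q).det
        = x ^ (N - q) * (x - ((θ : ℝ) : ℂ)) ^ q :=
      aux_proj_det_smul Q hQ hQ2 hrankQ x _
    have h3 : R * P = (R * P) * P := by rw [Matrix.mul_assoc, hP2]
    have h4 : ((1 : Matrix (Fin N) (Fin N) ℂ) - R * P).det
        = ((1 : Matrix (Fin N) (Fin N) ℂ) - P * (R * P)).det := by
      conv_lhs => rw [h3]
      exact Matrix.det_one_sub_mul_comm (R * P) P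
    have hPRP : P * (R * P) = x⁻¹ • (P - P * Q * P) + (x - ((θ : ℝ) : ℂ))⁻¹ • (P * Q * P) := by
      rw [hRdef]
      simp only [Matrix.add_mul, Matrix.mul_add, Matrix.sub_mul, Matrix.mul_sub,
        smul_mul_assoc, mul_smul_comm, Matrix.one_mul, Matrix.mul_one, smul_sub,
        ← Matrix.mul_assoc, hP2]
    set g : ℂ → ℂ := fun z => 1 - x⁻¹ * (eF z - z) - (x - ((θ : ℝ) : ℂ))⁻¹ * z with hgdef
    have hstep2 : (1 : Matrix (Fin N) (Fin N) ℂ) - x⁻¹ • (E - diagonal dC)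
        - (x - ((θ : ℝ) : ℂ))⁻¹ • diagonal dC = diagonal (fun i => g (dC i)) := by
      ext i j
      by_cases hij : i = j
      · subst hij
        simp only [Matrix.sub_apply, Matrix.smul_apply, Matrix.one_apply_eq, hEdef,
          Matrix.diagonal_apply_eq, hgdef, smul_eq_mul]
      · simp only [Matrix.sub_apply, Matrix.smul_apply, Matrix.one_apply_ne hij, hEdef,
          Matrix.diagonal_apply_ne _ hij, smul_eq_mul]
        ring
    have hWdiag : (1 : Matrix (Fin N) (Fin N) ℂ) - P * (R * P)
        = U * diagonal (fun i => g (dC i)) * star U := by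
      rw [← hstep2, hPRP, hSdecomp, hPdecomp]
      simp only [Matrix.mul_sub, Matrix.sub_mul, mul_smul_comm, smul_mul_assoc,
        Matrix.mul_one, hU1, smul_sub]
      abel
    have hdet2 : ((1 : Matrix (Fin N) (Fin N) ℂ) - P * (R * P)).det
        = ∏ i : Fin p, g ((t i : ℂ)) := by
      rw [hWdiag, aux_det_conj _ _ _ hU1, det_diagonal]
      exact key_prod g (by simp [hgdef, eF])
    have e1 : x * x⁻¹ = 1 := mul_inv_cancel₀ hx
    have e2 : (x - ((θ : ℝ) : ℂ)) * (x - ((θ : ℝ) : ℂ))⁻¹ = 1 := mul_inv_cancel₀ hxθ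
    have hfac : ∀ i : Fin p, x * (x - ((θ : ℝ) : ℂ)) * g ((t i : ℂ))
        = (x - ((lam i true : ℝ) : ℂ)) * (x - ((lam i false : ℝ) : ℂ)) := by
      intro i
      have hsumC : ((lam i true : ℝ) : ℂ) + ((lam i false : ℝ) : ℂ) = 1 + ((θ : ℝ) : ℂ) := by
        exact_mod_cast hsumR i
      have hprodC : ((lam i true : ℝ) : ℂ) * ((lam i false : ℝ) : ℂ)
          = ((θ : ℝ) : ℂ) - ((θ : ℝ) : ℂ) * ((t i : ℝ) : ℂ) := by exact_mod_cast hprodR i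
      have hg : g ((t i : ℂ)) = 1 - x⁻¹ * (1 - (t i : ℂ)) - (x - ((θ : ℝ) : ℂ))⁻¹ * (t i : ℂ) := by
        simp [hgdef, eF, htC0 i]
      rw [hg]
      linear_combination (-(x - ((θ : ℝ) : ℂ)) * (1 - ((t i : ℝ) : ℂ))) * e1
        + (-(x * ((t i : ℝ) : ℂ))) * e2 + x * hsumC - hprodC
    rw [h4, hdetQ, hdet2]
    have e3 : x ^ (N - q) = x ^ (N - p - q) * x ^ p := by
      rw [← pow_add]; congr 1; omega
    have e4 : (x - ((θ : ℝ) : ℂ)) ^ q = (x - ((θ : ℝ) : ℂ)) ^ (q - p) * (x - ((θ : ℝ) : ℂ)) ^ p := by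
      rw [← pow_add]; congr 1; omega
    have hPg : ∀ Pg : ℂ, Pg = ∏ i : Fin p, g ((t i : ℂ)) →
        x ^ (N - q) * (x - ((θ : ℝ) : ℂ)) ^ q * Pg
          = x ^ (N - p - q) * (x - ((θ : ℝ) : ℂ)) ^ (q - p) *
            ∏ i : Fin p, (x * (x - ((θ : ℝ) : ℂ)) * g ((t i : ℂ))) := by
      intro Pg hPgdef
      rw [Finset.prod_mul_distrib, Finset.prod_const, Finset.card_univ, Fintype.card_fin,
        ← hPgdef, e3, e4, mul_pow]
      ring
    rw [hPg (∏ i : Fin p, g ((t i : ℂ))) rfl, Finset.prod_congr rfl fun i _ => hfac i]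
  have hfinal : (P + (θ : ℂ) • Q).charpoly
      - (X ^ (N - p - q) * (X - C ((θ : ℝ) : ℂ)) ^ (q - p) *
        ∏ i : Fin p, ((X - C ((lam i true : ℝ) : ℂ)) * (X - C ((lam i false : ℝ) : ℂ)))) = 0 := by
    apply Polynomial.eq_zero_of_infinite_isRoot
    have hinf : (({0, ((θ : ℝ) : ℂ)} : Set ℂ)ᶜ).Infinite :=
      Set.Finite.infinite_compl (Set.toFinite _)
    apply Set.Infinite.mono ?_ hinf
    intro x hx
    obtain ⟨hx0, hxt⟩ : x ≠ 0 ∧ x ≠ ((θ : ℝ) : ℂ) := by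
      simpa [Set.mem_compl_iff, not_or] using hx
    show Polynomial.IsRoot _ x
    rw [Polynomial.IsRoot.def, Polynomial.eval_sub, aux_eval_charpoly, main_eval x hx0 hxt]
    simp only [Polynomial.eval_mul, Polynomial.eval_pow, Polynomial.eval_sub,
      Polynomial.eval_prod, Polynomial.eval_X, Polynomial.eval_C]
    ring
  exact sub_eq_zero.mp hfinal
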